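/- Let M ⊆ B(H) be a von Neumann algebra and v ∈ M an isometry (v*v = 1). Suppose v = t₁* a₁ t₁ + t₂* a₂ t₂ where a₁, a₂ ∈ M with ‖aᵢ‖ ≤ 1 and t₁, t₂ ∈ M are invertible with t₁*t₁ + t₂*t₂ = 1. Then a₁ and a₂ are isometries, and each aᵢ is similar to v via the invertible element tᵢ: aᵢ = tᵢ v tᵢ⁻¹. -/

import Mathlib

set_option synthInstance.maxHeartbeats 1000000


section Aux

variable {H : Type*} [NormedAddCommGroup H] [InnerProductSpace ℂ H] [CompleteSpace H]

lemma aux_contraction_nonneg (a : H →L[ℂ] H) (ha : ‖a‖ ≤ 1) :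
    (0 : H →L[ℂ] H) ≤ 1 - star a * a := by
  rw [sub_nonneg, ← CStarAlgebra.norm_le_one_iff_of_nonneg _ (star_mul_self_nonneg a),
    CStarRing.norm_star_mul_self]
  exact mul_le_one₀ ha (norm_nonneg a) ha

lemma aux_conj_eq_zero (c t s : H →L[ℂ] H) (hc : (0 : H →L[ℂ] H) ≤ c)
    (h : t * s = 1) (hz : star t * c * t = 0) : c = 0 := by
  have hr : CFC.sqrt c * CFC.sqrt c = c := CFC.sqrt_mul_sqrt_self c hc
  have hsa : star (CFC.sqrt c) = CFC.sqrt c :=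
    (IsSelfAdjoint.of_nonneg (CFC.sqrt_nonneg c))
  have h0 : star (CFC.sqrt c * t) * (CFC.sqrt c * t) = 0 := by
    rw [star_mul, hsa]
    calc star t * CFC.sqrt c * (CFC.sqrt c * t)
        = star t * (CFC.sqrt c * CFC.sqrt c) * t := by noncomm_ring
      _ = 0 := by rw [hr]; exact hz
  have h1 : CFC.sqrt c * t = 0 := by
    rwa [CStarRing.star_mul_self_eq_zero_iff] at h0
  have h2 : c * t = 0 := by
    calc c * t = CFC.sqrt c * (CFC.sqrt c * t) := by rw [← mul_assoc, hr]
      _ = 0 := by rw [h1, mul_zero]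
  calc c = c * (t * s) := by rw [h, mul_one]
    _ = (c * t) * s := by rw [mul_assoc]
    _ = 0 := by rw [h2, zero_mul]

end Aux

theorem isometry_proper_combination {H : Type*} [NormedAddCommGroup H]
    [InnerProductSpace ℂ H] [CompleteSpace H] (M : VonNeumannAlgebra H)
    (v a₁ a₂ t₁ t₂ s₁ s₂ : H →L[ℂ] H)
    (hvM : v ∈ M) (ha₁M : a₁ ∈ M) (ha₂M : a₂ ∈ M)
    (ht₁M : t₁ ∈ M) (ht₂M : t₂ ∈ M) (hs₁M : s₁ ∈ M) (hs₂M : s₂ ∈ M)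
    (hv : star v * v = 1) (ha₁ : ‖a₁‖ ≤ 1) (ha₂ : ‖a₂‖ ≤ 1)
    (h₁ : t₁ * s₁ = 1) (h₁' : s₁ * t₁ = 1) (h₂ : t₂ * s₂ = 1) (h₂' : s₂ * t₂ = 1)
    (hsum : star t₁ * t₁ + star t₂ * t₂ = 1)
    (hdec : v = star t₁ * a₁ * t₁ + star t₂ * a₂ * t₂) :
    star a₁ * a₁ = 1 ∧ star a₂ * a₂ = 1 ∧ a₁ = t₁ * v * s₁ ∧ a₂ = t₂ * v * s₂ := by
  set b₁ := a₁ * t₁ - t₁ * v with hb₁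
  set b₂ := a₂ * t₂ - t₂ * v with hb₂
  set c₁ := 1 - star a₁ * a₁ with hc₁def
  set c₂ := 1 - star a₂ * a₂ with hc₂def
  have hc₁ : (0 : H →L[ℂ] H) ≤ c₁ := aux_contraction_nonneg a₁ ha₁
  have hc₂ : (0 : H →L[ℂ] H) ≤ c₂ := aux_contraction_nonneg a₂ ha₂
  have hstarv : star t₁ * star a₁ * t₁ + star t₂ * star a₂ * t₂ = star v := by
    rw [hdec]; simp [star_add, star_mul, mul_assoc]
  have key : star b₁ * b₁ + star b₂ * b₂ + (star t₁ * c₁ * t₁ + star t₂ * c₂ * t₂) = 0 := by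
    have expand : star b₁ * b₁ + star b₂ * b₂ + (star t₁ * c₁ * t₁ + star t₂ * c₂ * t₂)
        = (star t₁ * t₁ + star t₂ * t₂) + star v * (star t₁ * t₁ + star t₂ * t₂) * v
          - (star t₁ * star a₁ * t₁ + star t₂ * star a₂ * t₂) * v
          - star v * (star t₁ * a₁ * t₁ + star t₂ * a₂ * t₂) := by
      simp only [hb₁, hb₂, hc₁def, hc₂def, star_sub, star_mul, star_star]
      noncomm_ring
    rw [expand, hsum, ← hdec, hstarv, mul_one, hv]
    abel
  have p1 : (0 : H →L[ℂ] H) ≤ star b₁ * b₁ := star_mul_self_nonneg b₁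
  have p2 : (0 : H →L[ℂ] H) ≤ star b₂ * b₂ := star_mul_self_nonneg b₂
  have q1 : (0 : H →L[ℂ] H) ≤ star t₁ * c₁ * t₁ := star_left_conjugate_nonneg hc₁ t₁
  have q2 : (0 : H →L[ℂ] H) ≤ star t₂ * c₂ * t₂ := star_left_conjugate_nonneg hc₂ t₂
  obtain ⟨e12, e34⟩ := (add_eq_zero_iff_of_nonneg (add_nonneg p1 p2) (add_nonneg q1 q2)).mp key
  obtain ⟨eb₁, eb₂⟩ := (add_eq_zero_iff_of_nonneg p1 p2).mp e12
  obtain ⟨eq₁, eq₂⟩ := (add_eq_zero_iff_of_nonneg q1 q2).mp e34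
  have hb₁0 : a₁ * t₁ = t₁ * v := by
    have := (CStarRing.star_mul_self_eq_zero_iff b₁).mp eb₁
    rw [hb₁, sub_eq_zero] at this; exact this
  have hb₂0 : a₂ * t₂ = t₂ * v := by
    have := (CStarRing.star_mul_self_eq_zero_iff b₂).mp eb₂
    rw [hb₂, sub_eq_zero] at this; exact this
  have ea₁ : a₁ = t₁ * v * s₁ := by
    calc a₁ = a₁ * (t₁ * s₁) := by rw [h₁, mul_one]
      _ = a₁ * t₁ * s₁ := by rw [mul_assoc]
      _ = t₁ * v * s₁ := by rw [hb₁0]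
  have ea₂ : a₂ = t₂ * v * s₂ := by
    calc a₂ = a₂ * (t₂ * s₂) := by rw [h₂, mul_one]
      _ = a₂ * t₂ * s₂ := by rw [mul_assoc]
      _ = t₂ * v * s₂ := by rw [hb₂0]
  have hc₁0 : c₁ = 0 := aux_conj_eq_zero c₁ t₁ s₁ hc₁ h₁ eq₁
  have hc₂0 : c₂ = 0 := aux_conj_eq_zero c₂ t₂ s₂ hc₂ h₂ eq₂
  rw [hc₁def, sub_eq_zero] at hc₁0
  rw [hc₂def, sub_eq_zero] at hc₂0
  exact ⟨hc₁0.symm, hc₂0.symm, ea₁, ea₂⟩
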